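/- Let γ > 1 and 0 < a < b < ∞. Then there exists a constant C = C(a,b,γ) > 0 such that for all ρ ∈ [0,∞) and all r ∈ [a,b]: (i) if r/2 ≤ ρ ≤ 2r then E(ρ|r) ≥ C |ρ − r|²; (ii) if ρ < r/2 or ρ > 2r then E(ρ|r) ≥ C (1 + ρ^γ). -/

import Mathlib

open Real Set

lemma monoAux {D : Set ℝ} (hD : Convex ℝ D) {f f' : ℝ → ℝ}
    (hc : ContinuousOn f D)
    (hd : ∀ x ∈ interior D, HasDerivAt f (f' x) x)
    (h0 : ∀ x ∈ interior D, 0 ≤ f' x) : MonotoneOn f D :=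
  monotoneOn_of_deriv_nonneg hD hc
    (fun x hx => (hd x hx).differentiableAt.differentiableWithinAt)
    (fun x hx => by rw [(hd x hx).deriv]; exact h0 x hx)

lemma antiAux {D : Set ℝ} (hD : Convex ℝ D) {f f' : ℝ → ℝ}
    (hc : ContinuousOn f D)
    (hd : ∀ x ∈ interior D, HasDerivAt f (f' x) x)
    (h0 : ∀ x ∈ interior D, f' x ≤ 0) : AntitoneOn f D :=
  antitoneOn_of_deriv_nonpos hD hc
    (fun x hx => (hd x hx).differentiableAt.differentiableWithinAt)
    (fun x hx => by rw [(hd x hx).deriv]; exact h0 x hx)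

lemma two_rpow_gt {γ : ℝ} (hγ : 1 < γ) : 1 + γ < (2:ℝ) ^ γ := by
  have hγ0 : (0:ℝ) < γ := by linarith
  have hlog : (0:ℝ) < Real.log 2 := Real.log_pos (by norm_num)
  have hne : (0:ℝ) ≠ γ * Real.log 2 := by positivity
  have hkey := strictConvexOn_exp.2 (mem_univ (0:ℝ)) (mem_univ (γ * Real.log 2)) hne
      (by rw [sub_pos]; exact (div_lt_one hγ0).mpr hγ) (by positivity : (0:ℝ) < 1/γ) (by field_simp; ring)
  have heq : (1 - 1/γ) • (0:ℝ) + (1/γ) • (γ * Real.log 2) = Real.log 2 := by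
    simp only [smul_eq_mul]
    field_simp
    ring
  rw [heq] at hkey
  simp only [smul_eq_mul, Real.exp_zero, Real.exp_log (by norm_num : (0:ℝ) < 2)] at hkey
  have h2 : (2:ℝ) ^ γ = Real.exp (γ * Real.log 2) := by
    rw [Real.rpow_def_of_pos (by norm_num), mul_comm]
  rw [h2]
  have hγ0' : γ ≠ 0 := ne_of_gt hγ0
  have h3 : 1 + 1/γ < 1/γ * Real.exp (γ * Real.log 2) := by linarith
  have h4 := mul_lt_mul_of_pos_left h3 hγ0
  have h5 : γ * (1/γ * Real.exp (γ * Real.log 2)) = Real.exp (γ * Real.log 2) := by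
    field_simp
  have h6 : γ * (1 + 1/γ) = γ + 1 := by field_simp
  rw [h5, h6] at h4
  linarith

lemma delta_pos {γ : ℝ} (hγ : 1 < γ) : 0 < γ/2 + (2:ℝ) ^ (-γ) - 1 := by
  have hp : (0:ℝ) < (2:ℝ) ^ (-γ) := Real.rpow_pos_of_pos (by norm_num) _
  rcases le_or_gt 2 γ with h | h
  · linarith
  · -- 2^γ < 2γ for 1 < γ < 2, via strict convexity of exp
    have hlog : (0:ℝ) < Real.log 2 := Real.log_pos (by norm_num)
    have hne : Real.log 2 ≠ 2 * Real.log 2 := by nlinarith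
    have hkey := strictConvexOn_exp.2 (mem_univ (Real.log 2)) (mem_univ (2 * Real.log 2)) hne
        (by linarith : (0:ℝ) < 2 - γ) (by linarith : (0:ℝ) < γ - 1) (by ring)
    have heq : (2 - γ) • Real.log 2 + (γ - 1) • (2 * Real.log 2) = γ * Real.log 2 := by
      simp only [smul_eq_mul]; ring
    rw [heq] at hkey
    have he2 : Real.exp (Real.log 2) = 2 := Real.exp_log (by norm_num)
    have he4 : Real.exp (2 * Real.log 2) = 4 := by
      rw [two_mul, Real.exp_add, he2]; norm_num
    rw [he2, he4] at hkey
    simp only [smul_eq_mul] at hkey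
    have h2 : (2:ℝ) ^ γ = Real.exp (γ * Real.log 2) := by
      rw [Real.rpow_def_of_pos (by norm_num), mul_comm]
    have hlt : (2:ℝ) ^ γ < 2 * γ := by rw [h2]; nlinarith
    have hmul : (2:ℝ) ^ (-γ) * (2:ℝ) ^ γ = 1 := by
      rw [← Real.rpow_add (by norm_num : (0:ℝ) < 2)]; norm_num
    nlinarith [sq_nonneg (γ - 1), Real.rpow_pos_of_pos (by norm_num : (0:ℝ) < 2) γ]

lemma slope_lb {γ a b : ℝ} (hγ : 1 < γ) (ha : 0 < a) (hab : a < b) :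
    ∀ ⦃x y : ℝ⦄, x ∈ Icc (a/2) (2*b) → y ∈ Icc (a/2) (2*b) → y ≤ x →
      (γ-1) * min ((a/2) ^ (γ - 1 - 1)) ((2*b) ^ (γ - 1 - 1)) * (x - y)
        ≤ x ^ (γ-1) - y ^ (γ-1) := by
  set m := min ((a/2) ^ (γ - 1 - 1)) ((2*b) ^ (γ - 1 - 1)) with hm
  have hq : 0 < γ - 1 := by linarith
  have hmono : MonotoneOn (fun t : ℝ => t ^ (γ-1) - (γ-1)*m*t) (Icc (a/2) (2*b)) := by
    apply monoAux (convex_Icc _ _) (f' := fun t => (γ-1)*t^(γ-1-1) - (γ-1)*m)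
    · apply ContinuousOn.sub
      · intro t ht
        exact (Real.continuousAt_rpow_const t (γ-1)
          (Or.inl (ne_of_gt (lt_of_lt_of_le (by linarith) ht.1)))).continuousWithinAt
      · exact (continuous_const.mul continuous_id).continuousOn
    · intro t ht
      rw [interior_Icc] at ht
      have ht0 : 0 < t := lt_trans (by linarith) ht.1
      have h2 : HasDerivAt (fun t : ℝ => (γ-1)*m*t) ((γ-1)*m) t := by
        simpa using (hasDerivAt_id t).const_mul ((γ-1)*m)
      exact (Real.hasDerivAt_rpow_const (p := γ-1) (Or.inl ht0.ne')).sub h2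
    · intro t ht
      rw [interior_Icc] at ht
      have ht0 : 0 < t := lt_trans (by linarith) ht.1
      have : m ≤ t ^ (γ - 1 - 1) := by
        rcases le_or_gt 0 (γ - 1 - 1) with he | he
        · exact le_trans (min_le_left _ _)
            (Real.rpow_le_rpow (by linarith) ht.1.le he)
        · exact le_trans (min_le_right _ _)
            (Real.rpow_le_rpow_of_nonpos ht0 ht.2.le he.le)
      nlinarith
  intro x y hx hy hyx
  have := hmono hy hx hyx
  simp only at this
  nlinarith

/-- Bregman divergence of `t ↦ t^γ` based at `r`. -/
noncomputable def Fb (γ r : ℝ) : ℝ → ℝ := fun t => t^γ - r^γ - γ*r^(γ-1)*(t-r)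

lemma Fb_hasDeriv {γ : ℝ} (hγ : 1 < γ) (r t : ℝ) :
    HasDerivAt (Fb γ r) (γ*t^(γ-1) - γ*r^(γ-1)) t := by
  have h1 : HasDerivAt (fun t : ℝ => t ^ γ) (γ * t^(γ-1)) t :=
    Real.hasDerivAt_rpow_const (Or.inr hγ.le)
  have h2 : HasDerivAt (fun t : ℝ => γ*r^(γ-1)*(t-r)) (γ*r^(γ-1)) t := by
    simpa using ((hasDerivAt_id' t).sub_const r).const_mul (γ*r^(γ-1))
  exact (h1.sub_const (r^γ)).sub h2

lemma Fb_self (γ r : ℝ) : Fb γ r r = 0 := by simp [Fb]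

lemma rpow_pred_mul {r γ : ℝ} (hr : 0 < r) : r ^ (γ-1) * r = r ^ γ := by
  rw [← Real.rpow_add_one hr.ne' (γ-1)]
  congr 1
  ring

/-- Quadratic regime. -/
lemma Fb_quad {γ a b r ρ : ℝ} (hγ : 1 < γ) (ha : 0 < a) (hab : a < b)
    (hr : r ∈ Icc a b) (hρ1 : r/2 ≤ ρ) (hρ2 : ρ ≤ 2*r) :
    γ*(γ-1)*(min ((a/2) ^ (γ - 1 - 1)) ((2*b) ^ (γ - 1 - 1)))/2 * (ρ-r)^2 ≤ Fb γ r ρ := by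
  have hγ1 : (0:ℝ) < γ - 1 := by linarith
  have hγ0 : (0:ℝ) < γ := by linarith
  have hr0 : 0 < r := lt_of_lt_of_le ha hr.1
  set m := min ((a/2) ^ (γ - 1 - 1)) ((2*b) ^ (γ - 1 - 1)) with hmdef
  have hh' : ∀ t : ℝ, HasDerivAt (fun t => Fb γ r t - γ*(γ-1)*m/2*(t-r)^2)
      (γ*t^(γ-1) - γ*r^(γ-1) - γ*(γ-1)*m/2*(2*(t-r))) t := by
    intro t
    have h2 : HasDerivAt (fun t : ℝ => γ*(γ-1)*m/2*(t-r)^2) (γ*(γ-1)*m/2*(2*(t-r))) t := by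
      have := (((hasDerivAt_id' t).sub_const r).pow 2).const_mul (γ*(γ-1)*m/2)
      simpa using this
    exact (Fb_hasDeriv hγ r t).sub h2
  have hmono : MonotoneOn (fun t => Fb γ r t - γ*(γ-1)*m/2*(t-r)^2) (Icc r (2*r)) := by
    apply monoAux (convex_Icc _ _)
      (f' := fun t => γ*t^(γ-1) - γ*r^(γ-1) - γ*(γ-1)*m/2*(2*(t-r)))
    · exact fun t _ => (hh' t).continuousAt.continuousWithinAt
    · exact fun t _ => hh' t
    · intro t ht
      rw [interior_Icc] at ht
      have hs := slope_lb hγ ha hab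
        (x := t) (y := r) ⟨by linarith [ht.1, hr.1], by linarith [ht.2, hr.2]⟩
        ⟨by linarith [hr.1], by linarith [hr.2]⟩ ht.1.le
      rw [← hmdef] at hs
      nlinarith [mul_le_mul_of_nonneg_left hs hγ0.le]
  have hanti : AntitoneOn (fun t => Fb γ r t - γ*(γ-1)*m/2*(t-r)^2) (Icc (r/2) r) := by
    apply antiAux (convex_Icc _ _)
      (f' := fun t => γ*t^(γ-1) - γ*r^(γ-1) - γ*(γ-1)*m/2*(2*(t-r)))
    · exact fun t _ => (hh' t).continuousAt.continuousWithinAt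
    · exact fun t _ => hh' t
    · intro t ht
      rw [interior_Icc] at ht
      have hs := slope_lb hγ ha hab
        (x := r) (y := t) ⟨by linarith [hr.1], by linarith [hr.2]⟩
        ⟨by linarith [ht.1, hr.1], by linarith [ht.2, hr.2]⟩ ht.2.le
      rw [← hmdef] at hs
      nlinarith [mul_le_mul_of_nonneg_left hs hγ0.le]
  rcases le_total ρ r with hle | hle
  · have := hanti ⟨hρ1, hle⟩ ⟨by linarith, le_refl r⟩ hle
    simp only at this
    nlinarith [Fb_self γ r, this]
  · have := hmono ⟨le_refl r, by linarith⟩ ⟨hle, hρ2⟩ hle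
    simp only at this
    nlinarith [Fb_self γ r, this]

/-- Far regime: for `ρ ≥ 2r`, `F(ρ) ≥ θ ρ^γ`. -/
lemma Fb_far {γ r ρ : ℝ} (hγ : 1 < γ) (hr0 : 0 < r) (hρ : 2*r ≤ ρ) :
    min (1 - (2:ℝ)^(1-γ)) (((2:ℝ)^γ - 1 - γ)/(2:ℝ)^γ) * ρ^γ ≤ Fb γ r ρ := by
  have hγ1 : (0:ℝ) < γ - 1 := by linarith
  have hγ0 : (0:ℝ) < γ := by linarith
  have h2γpos : (0:ℝ) < (2:ℝ) ^ γ := Real.rpow_pos_of_pos two_pos γ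
  have hupos : (0:ℝ) < (2:ℝ) ^ (1-γ) := Real.rpow_pos_of_pos two_pos _
  set θ := min (1 - (2:ℝ)^(1-γ)) (((2:ℝ)^γ - 1 - γ)/(2:ℝ)^γ) with hθdef
  have hθ1 : θ ≤ 1 - (2:ℝ)^(1-γ) := min_le_left _ _
  have hθ2 : θ ≤ ((2:ℝ)^γ - 1 - γ)/(2:ℝ)^γ := min_le_right _ _
  have hg' : ∀ t : ℝ, HasDerivAt (fun t => Fb γ r t - θ*t^γ)
      (γ*t^(γ-1) - γ*r^(γ-1) - θ*(γ*t^(γ-1))) t :=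
    fun t => (Fb_hasDeriv hγ r t).sub
      ((Real.hasDerivAt_rpow_const (Or.inr hγ.le)).const_mul θ)
  have hmono : MonotoneOn (fun t => Fb γ r t - θ*t^γ) (Ici (2*r)) := by
    apply monoAux (convex_Ici _)
      (f' := fun t => γ*t^(γ-1) - γ*r^(γ-1) - θ*(γ*t^(γ-1)))
    · exact fun t _ => (hg' t).continuousAt.continuousWithinAt
    · exact fun t _ => hg' t
    · intro t ht
      rw [interior_Ici] at ht
      have e2 : (2*r)^(γ-1) ≤ t^(γ-1) :=
        Real.rpow_le_rpow (by positivity) (le_of_lt ht) hγ1.le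
      have e3 : ((2:ℝ)*r)^(γ-1) = 2^(γ-1)*r^(γ-1) :=
        Real.mul_rpow (by norm_num) hr0.le
      have hu : (2:ℝ)^(1-γ) * 2^(γ-1) = 1 := by
        rw [← Real.rpow_add two_pos]
        norm_num
      have hh1 : (2:ℝ)^(1-γ)*((2*r)^(γ-1)) ≤ (1-θ)*t^(γ-1) :=
        mul_le_mul (by linarith) e2 (Real.rpow_nonneg (by positivity) _) (by linarith)
      have hh2 : (2:ℝ)^(1-γ)*((2*r)^(γ-1)) = r^(γ-1) := by
        rw [e3, ← mul_assoc, hu, one_mul]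
      have hh3 : r^(γ-1) ≤ (1-θ)*t^(γ-1) := by rw [← hh2]; exact hh1
      nlinarith [mul_le_mul_of_nonneg_left hh3 hγ0.le]
  have h2rγ : ((2:ℝ)*r)^γ = 2^γ*r^γ := Real.mul_rpow (by norm_num) hr0.le
  have hF2r : Fb γ r (2*r) = ((2:ℝ)^γ - 1 - γ)*r^γ := by
    show (2*r)^γ - r^γ - γ*r^(γ-1)*(2*r-r) = _
    rw [h2rγ]
    linear_combination (-γ) * (rpow_pred_mul (γ := γ) hr0)
  have hg2r : 0 ≤ Fb γ r (2*r) - θ*(2*r)^γ := by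
    have e4 : θ*((2:ℝ)^γ*r^γ) ≤ (((2:ℝ)^γ - 1 - γ)/(2:ℝ)^γ)*((2:ℝ)^γ*r^γ) :=
      mul_le_mul_of_nonneg_right hθ2 (by positivity)
    have e5 : (((2:ℝ)^γ - 1 - γ)/(2:ℝ)^γ)*((2:ℝ)^γ*r^γ) = ((2:ℝ)^γ - 1 - γ)*r^γ := by
      field_simp
    rw [hF2r, h2rγ]
    linarith [e4, e5.le]
  have := hmono (le_refl (2*r)) (hρ : 2*r ≤ ρ) hρ
  simp only at this
  linarith

/-- Near-vacuum regime: for `0 ≤ ρ ≤ r/2`, `F(ρ) ≥ r^γ (γ/2 + 2^{-γ} - 1)`. -/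
lemma Fb_vac {γ r ρ : ℝ} (hγ : 1 < γ) (hr0 : 0 < r) (hρ0 : 0 ≤ ρ) (hρ : ρ ≤ r/2) :
    r^γ * (γ/2 + (2:ℝ)^(-γ) - 1) ≤ Fb γ r ρ := by
  have hγ1 : (0:ℝ) < γ - 1 := by linarith
  have hγ0 : (0:ℝ) < γ := by linarith
  have hanti : AntitoneOn (Fb γ r) (Icc 0 (r/2)) := by
    apply antiAux (convex_Icc _ _) (f' := fun t => γ*t^(γ-1) - γ*r^(γ-1))
    · exact fun t _ => (Fb_hasDeriv hγ r t).continuousAt.continuousWithinAt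
    · exact fun t _ => Fb_hasDeriv hγ r t
    · intro t ht
      rw [interior_Icc] at ht
      have : t ^ (γ-1) < r ^ (γ-1) :=
        Real.rpow_lt_rpow ht.1.le (by linarith [ht.2]) hγ1
      nlinarith
  have hFρ : Fb γ r (r/2) ≤ Fb γ r ρ :=
    hanti ⟨hρ0, hρ⟩ ⟨by positivity, le_refl _⟩ hρ
  have hhalf : (r/2)^γ = r^γ * (2:ℝ)^(-γ) := by
    rw [Real.div_rpow hr0.le (by norm_num : (0:ℝ) ≤ 2),
      Real.rpow_neg (by norm_num : (0:ℝ) ≤ 2)]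
    ring
  have hFhalf : Fb γ r (r/2) = r^γ * (γ/2 + (2:ℝ)^(-γ) - 1) := by
    show (r/2)^γ - r^γ - γ*r^(γ-1)*(r/2-r) = _
    rw [hhalf]
    linear_combination (γ/2) * (rpow_pred_mul (γ := γ) hr0)
  linarith [hFhalf ▸ hFρ]

/-- The pressure potential `P(s) = (s^γ − s)/(γ − 1)` associated with `p(s) = s^γ`. -/
noncomputable def Ppot (γ : ℝ) : ℝ → ℝ := fun s => (s ^ γ - s) / (γ - 1)

/-- The relative pressure energy `E(ρ|r) = P(ρ) − P'(r)(ρ − r) − P(r)`. -/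
noncomputable def relE (γ ρ r : ℝ) : ℝ :=
  Ppot γ ρ - deriv (Ppot γ) r * (ρ - r) - Ppot γ r

lemma relE_eq {γ ρ r : ℝ} (hγ : 1 < γ) (hr0 : 0 < r) :
    relE γ ρ r = Fb γ r ρ / (γ - 1) := by
  have hP : deriv (Ppot γ) r = (γ * r^(γ-1) - 1)/(γ-1) := by
    have h2 : HasDerivAt (fun s : ℝ => s ^ γ - s) (γ * r^(γ-1) - 1) r :=
      (Real.hasDerivAt_rpow_const (Or.inl hr0.ne')).sub (hasDerivAt_id' r)
    exact (h2.div_const (γ-1) : HasDerivAt (Ppot γ) _ r).deriv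
  have hF : Fb γ r ρ = ρ^γ - r^γ - γ*r^(γ-1)*(ρ-r) := rfl
  rw [hF]
  unfold relE
  rw [hP]
  unfold Ppot
  ring

/-- Coercivity of the relative energy density (Lemma 3.2). -/
theorem stmt_3 (γ a b : ℝ) (hγ : 1 < γ) (ha : 0 < a) (hab : a < b) :
    ∃ C > 0, ∀ ρ r : ℝ, 0 ≤ ρ → r ∈ Set.Icc a b →
      ((r / 2 ≤ ρ ∧ ρ ≤ 2 * r) → C * |ρ - r| ^ 2 ≤ relE γ ρ r) ∧
      ((ρ < r / 2 ∨ 2 * r < ρ) → C * (1 + ρ ^ γ) ≤ relE γ ρ r) := by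
  have hγ1 : 0 < γ - 1 := by linarith
  have hγ0 : 0 < γ := by linarith
  have hb : 0 < b := lt_trans ha hab
  have hm0 : 0 < min ((a/2) ^ (γ - 1 - 1)) ((2*b) ^ (γ - 1 - 1)) :=
    lt_min (Real.rpow_pos_of_pos (by linarith) _) (Real.rpow_pos_of_pos (by linarith) _)
  have h2γpos : (0:ℝ) < (2:ℝ) ^ γ := Real.rpow_pos_of_pos two_pos γ
  have h2γ : 1 + γ < (2:ℝ) ^ γ := two_rpow_gt hγ
  have hupos : (0:ℝ) < (2:ℝ) ^ (1-γ) := Real.rpow_pos_of_pos two_pos _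
  have hult : (2:ℝ) ^ (1-γ) < 1 :=
    Real.rpow_lt_one_of_one_lt_of_neg one_lt_two (by linarith)
  have hθ0 : 0 < min (1 - (2:ℝ)^(1-γ)) (((2:ℝ)^γ - 1 - γ)/(2:ℝ)^γ) :=
    lt_min (by linarith) (div_pos (by linarith) h2γpos)
  have hμ0 : 0 < min 1 ((2*a)^γ) :=
    lt_min one_pos (Real.rpow_pos_of_pos (by linarith) _)
  have hδ : 0 < γ/2 + (2:ℝ)^(-γ) - 1 := delta_pos hγ
  have haγ : (0:ℝ) < a^γ := Real.rpow_pos_of_pos ha _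
  have hbγ : (0:ℝ) ≤ (b/2)^γ := Real.rpow_nonneg (by linarith) _
  -- constants
  set m := min ((a/2) ^ (γ - 1 - 1)) ((2*b) ^ (γ - 1 - 1)) with hmdef
  set θ := min (1 - (2:ℝ)^(1-γ)) (((2:ℝ)^γ - 1 - γ)/(2:ℝ)^γ) with hθdef
  set μ := min 1 ((2*a)^γ) with hμdef
  clear_value m θ μ
  set C1 := γ * m / 2 with hC1def
  set C2 := θ/2 * μ / (γ-1) with hC2def
  set C3 := a^γ * (γ/2 + (2:ℝ)^(-γ) - 1) / ((γ-1)*(1 + (b/2)^γ)) with hC3def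
  have hC1p : 0 < C1 := by
    rw [hC1def]; exact div_pos (mul_pos hγ0 hm0) two_pos
  have hC2p : 0 < C2 := by
    rw [hC2def]; exact div_pos (mul_pos (by linarith) hμ0) hγ1
  have hC3p : 0 < C3 := by
    rw [hC3def]
    exact div_pos (mul_pos haγ hδ) (mul_pos hγ1 (by linarith))
  clear_value C1 C2 C3
  refine ⟨min C1 (min C2 C3), lt_min hC1p (lt_min hC2p hC3p), ?_⟩
  set C := min C1 (min C2 C3) with hCdef
  clear_value C
  intro ρ r hρ hr
  have hr0 : 0 < r := lt_of_lt_of_le ha hr.1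
  have hrel := relE_eq (ρ := ρ) hγ hr0
  have hργ0 : (0:ℝ) ≤ ρ ^ γ := Real.rpow_nonneg hρ _
  constructor
  · rintro ⟨h1, h2⟩
    have hKF := Fb_quad hγ ha hab hr h1 h2
    rw [← hmdef] at hKF
    rw [hrel, sq_abs, le_div_iff₀ hγ1]
    have hC1 : C ≤ C1 := by rw [hCdef]; exact min_le_left _ _
    have hCC := mul_le_mul_of_nonneg_right hC1 (by positivity : (0:ℝ) ≤ (ρ-r)^2 * (γ-1))
    rw [hC1def] at hCC
    linarith [hCC, hKF]
  · rintro (hlt | hgt)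
    · -- near vacuum
      have hFlow' := Fb_vac hγ hr0 hρ hlt.le
      have hrγ : a^γ ≤ r^γ := Real.rpow_le_rpow ha.le hr.1 hγ0.le
      have hFlow : a^γ * (γ/2 + (2:ℝ)^(-γ) - 1) ≤ Fb γ r ρ := by
        nlinarith [mul_le_mul_of_nonneg_right hrγ hδ.le]
      have hρb : ρ ^ γ ≤ (b/2)^γ :=
        Real.rpow_le_rpow hρ (by linarith [hr.2]) hγ0.le
      rw [hrel, le_div_iff₀ hγ1]
      have hC3 : C ≤ C3 := by
        rw [hCdef]; exact le_trans (min_le_right _ _) (min_le_right _ _)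
      have e1 : C * (1+ρ^γ) ≤ C3 * (1+(b/2)^γ) :=
        mul_le_mul hC3 (by linarith) (by linarith) hC3p.le
      have e2 := mul_le_mul_of_nonneg_right e1 hγ1.le
      have e3 : C3 * (1+(b/2)^γ) * (γ-1) = a^γ * (γ/2 + (2:ℝ)^(-γ) - 1) := by
        rw [hC3def]
        field_simp
      linarith
    · -- far regime
      have hFθ' := Fb_far hγ hr0 hgt.le
      rw [← hθdef] at hFθ'
      have hρ2a : (2*a)^γ ≤ ρ^γ :=
        Real.rpow_le_rpow (by positivity) (by linarith [hr.1]) hγ0.le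
      have hμ1 : μ ≤ 1 := by rw [hμdef]; exact min_le_left _ _
      have hμ2 : μ ≤ (2*a)^γ := by rw [hμdef]; exact min_le_right _ _
      have hθ2 : (0:ℝ) ≤ θ/2 := by linarith
      have hkey : θ/2 * μ * (1 + ρ^γ) ≤ Fb γ r ρ := by
        have s1 : θ/2 * μ ≤ θ/2 * ρ^γ :=
          mul_le_mul_of_nonneg_left (le_trans hμ2 hρ2a) hθ2
        have s2 : θ/2 * μ * ρ^γ ≤ θ/2 * 1 * ρ^γ :=
          mul_le_mul_of_nonneg_right (mul_le_mul_of_nonneg_left hμ1 hθ2) hργ0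
        linarith [s1, s2, hFθ']
      rw [hrel, le_div_iff₀ hγ1]
      have hC2 : C ≤ C2 := by
        rw [hCdef]; exact le_trans (min_le_right _ _) (min_le_left _ _)
      have hC2' : C * (γ-1) ≤ θ/2 * μ := by
        have := (le_div_iff₀ hγ1).mp (hC2.trans_eq hC2def)
        linarith
      have hfin := mul_le_mul_of_nonneg_right hC2' (by linarith : (0:ℝ) ≤ 1 + ρ^γ)
      linarith [hfin, hkey]
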